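/- Let R = ℚ[α] and let M ⊂ R³ be the R-module of triples (f_x, f_y, f_z) with f_x ≡ f_y ≡ f_z mod α and f_x − 2f_y + f_z ≡ 0 mod α². Then M/(α·M) (quotient by the submodule α·M, where α acts diagonally) is a 3-dimensional ℚ-vector space. -/
import Mathlib


open Polynomial

noncomputable section

namespace Stmt19

/-- The module of congruence triples over `R = ℚ[α]` (here `α = X`):
`f_x ≡ f_y ≡ f_z mod α` and `f_x − 2 f_y + f_z ≡ 0 mod α²`. -/
def M : Submodule ℚ[X] (ℚ[X] × ℚ[X] × ℚ[X]) where
  carrier := {f | X ∣ f.1 - f.2.1 ∧ X ∣ f.2.1 - f.2.2 ∧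
    X ^ 2 ∣ f.1 - 2 * f.2.1 + f.2.2}
  zero_mem' := by simp
  add_mem' := by
    rintro a b ⟨h1, h2, h3⟩ ⟨g1, g2, g3⟩
    refine ⟨?_, ?_, ?_⟩
    · have := dvd_add h1 g1
      convert this using 1
      simp only [Prod.fst_add, Prod.snd_add]; ring
    · have := dvd_add h2 g2
      convert this using 1
      simp only [Prod.fst_add, Prod.snd_add]; ring
    · have := dvd_add h3 g3
      convert this using 1
      simp only [Prod.fst_add, Prod.snd_add]; ring
  smul_mem' := by
    rintro c a ⟨h1, h2, h3⟩
    refine ⟨?_, ?_, ?_⟩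
    · have := h1.mul_left c
      convert this using 1
      simp only [Prod.smul_fst, Prod.smul_snd, smul_eq_mul]; ring
    · have := h2.mul_left c
      convert this using 1
      simp only [Prod.smul_fst, Prod.smul_snd, smul_eq_mul]; ring
    · have := h3.mul_left c
      convert this using 1
      simp only [Prod.smul_fst, Prod.smul_snd, smul_eq_mul]; ring

/-- The submodule `α·M` of `M`. -/
def N : Submodule ℚ[X] M := (Ideal.span {(X : ℚ[X])}) • (⊤ : Submodule ℚ[X] M)

/-- The quotient `M/(α·M)`. -/
abbrev Q := M ⧸ N

instance : Module ℚ Q := Module.compHom Q (algebraMap ℚ ℚ[X])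

local instance target_mod : Module ℚ[X] (Fin 3 → ℚ) :=
  Module.compHom _ (evalRingHom 0 : ℚ[X] →+* ℚ)

lemma target_smul (p : ℚ[X]) (v : Fin 3 → ℚ) (i : Fin 3) :
    (p • v) i = eval 0 p * v i := rfl

/-- The coordinate map `M → ℚ³`. -/
def phi : M →ₗ[ℚ[X]] (Fin 3 → ℚ) where
  toFun m := ![(m : ℚ[X] × ℚ[X] × ℚ[X]).2.1.coeff 0,
    ((m : ℚ[X] × ℚ[X] × ℚ[X]).2.1 - (m : ℚ[X] × ℚ[X] × ℚ[X]).2.2).coeff 1,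
    ((m : ℚ[X] × ℚ[X] × ℚ[X]).1 - 2 * (m : ℚ[X] × ℚ[X] × ℚ[X]).2.1
      + (m : ℚ[X] × ℚ[X] × ℚ[X]).2.2).coeff 2]
  map_add' a b := by
    funext i
    fin_cases i <;>
      simp only [Submodule.coe_add, Prod.fst_add, Prod.snd_add, Fin.isValue, Fin.reduceFinMk,
        Pi.add_apply, Matrix.cons_val_zero, Matrix.cons_val_one, Matrix.head_cons,
        Matrix.cons_val_two, Matrix.tail_cons, Fin.mk_zero, Fin.mk_one]
    · rw [coeff_add]
    · rw [show (a : ℚ[X] × ℚ[X] × ℚ[X]).2.1 + (b : ℚ[X] × ℚ[X] × ℚ[X]).2.1 -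
        ((a : ℚ[X] × ℚ[X] × ℚ[X]).2.2 + (b : ℚ[X] × ℚ[X] × ℚ[X]).2.2) =
        ((a : ℚ[X] × ℚ[X] × ℚ[X]).2.1 - (a : ℚ[X] × ℚ[X] × ℚ[X]).2.2) +
        ((b : ℚ[X] × ℚ[X] × ℚ[X]).2.1 - (b : ℚ[X] × ℚ[X] × ℚ[X]).2.2) from by ring, coeff_add]
    · rw [show (a : ℚ[X] × ℚ[X] × ℚ[X]).1 + (b : ℚ[X] × ℚ[X] × ℚ[X]).1 -
        2 * ((a : ℚ[X] × ℚ[X] × ℚ[X]).2.1 + (b : ℚ[X] × ℚ[X] × ℚ[X]).2.1) +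
        ((a : ℚ[X] × ℚ[X] × ℚ[X]).2.2 + (b : ℚ[X] × ℚ[X] × ℚ[X]).2.2) =
        ((a : ℚ[X] × ℚ[X] × ℚ[X]).1 - 2 * (a : ℚ[X] × ℚ[X] × ℚ[X]).2.1
          + (a : ℚ[X] × ℚ[X] × ℚ[X]).2.2) +
        ((b : ℚ[X] × ℚ[X] × ℚ[X]).1 - 2 * (b : ℚ[X] × ℚ[X] × ℚ[X]).2.1
          + (b : ℚ[X] × ℚ[X] × ℚ[X]).2.2) from by ring, coeff_add]
  map_smul' p m := by
    obtain ⟨u, hu⟩ := m.2.2.1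
    obtain ⟨w, hw⟩ := m.2.2.2
    funext i
    fin_cases i <;>
      simp only [RingHom.id_apply, Submodule.coe_smul, Prod.smul_fst, Prod.smul_snd,
        smul_eq_mul, Fin.isValue, Fin.reduceFinMk, target_smul, Matrix.cons_val_zero,
        Matrix.cons_val_one, Matrix.head_cons, Matrix.cons_val_two, Matrix.tail_cons,
        Fin.mk_zero, Fin.mk_one]
    · rw [mul_coeff_zero, coeff_zero_eq_eval_zero p]
    · rw [show p * (m : ℚ[X] × ℚ[X] × ℚ[X]).2.1 - p * (m : ℚ[X] × ℚ[X] × ℚ[X]).2.2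
          = X * (p * u) from by linear_combination p * hu,
        show (m : ℚ[X] × ℚ[X] × ℚ[X]).2.1 - (m : ℚ[X] × ℚ[X] × ℚ[X]).2.2 = X * u from hu,
        show (1 : ℕ) = 0 + 1 from rfl, coeff_X_mul, coeff_X_mul, mul_coeff_zero,
        coeff_zero_eq_eval_zero p]
    · rw [show p * (m : ℚ[X] × ℚ[X] × ℚ[X]).1 - 2 * (p * (m : ℚ[X] × ℚ[X] × ℚ[X]).2.1)
          + p * (m : ℚ[X] × ℚ[X] × ℚ[X]).2.2 = X ^ 2 * (p * w) from by linear_combination p * hw,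
        hw, show (2 : ℕ) = 0 + 2 from rfl, coeff_X_pow_mul, coeff_X_pow_mul, mul_coeff_zero,
        coeff_zero_eq_eval_zero p]


lemma N_le_ker : N ≤ LinearMap.ker phi := by
  rw [N]
  refine Submodule.smul_le.mpr fun r hr m _ => ?_
  rw [Ideal.mem_span_singleton] at hr
  have hr0 : eval 0 r = 0 := by
    obtain ⟨c, rfl⟩ := hr; simp
  rw [LinearMap.mem_ker, map_smul]
  funext i
  rw [target_smul, hr0, zero_mul]
  rfl

lemma ker_le_N : LinearMap.ker phi ≤ N := by
  intro m hk
  rw [LinearMap.mem_ker] at hk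
  obtain ⟨h1, h2, h3⟩ := m.2
  have k0 : (m : ℚ[X] × ℚ[X] × ℚ[X]).2.1.coeff 0 = 0 := congrFun hk 0
  have k1 : ((m : ℚ[X] × ℚ[X] × ℚ[X]).2.1 - (m : ℚ[X] × ℚ[X] × ℚ[X]).2.2).coeff 1 = 0 :=
    congrFun hk 1
  have k2 : ((m : ℚ[X] × ℚ[X] × ℚ[X]).1 - 2 * (m : ℚ[X] × ℚ[X] × ℚ[X]).2.1
      + (m : ℚ[X] × ℚ[X] × ℚ[X]).2.2).coeff 2 = 0 := congrFun hk 2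
  set f := (m : ℚ[X] × ℚ[X] × ℚ[X]).1
  set g := (m : ℚ[X] × ℚ[X] × ℚ[X]).2.1
  set h := (m : ℚ[X] × ℚ[X] × ℚ[X]).2.2
  have hXg : X ∣ g := X_dvd_iff.mpr k0
  have hXh : X ∣ h := by
    have := dvd_sub hXg h2; simpa using this
  have hXf : X ∣ f := by
    have h4 : X ∣ f - 2 * g + h := (dvd_pow_self X two_ne_zero).trans h3
    have h5 : X ∣ (f - 2 * g + h) + (2 * g - h) :=
      dvd_add h4 (dvd_sub (hXg.mul_left 2) hXh)
    rwa [show (f - 2 * g + h) + (2 * g - h) = f from by ring] at h5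
  have hX2gh : X ^ 2 ∣ g - h := by
    rw [X_pow_dvd_iff]
    intro d hd
    interval_cases d
    · exact X_dvd_iff.mp h2
    · exact k1
  have hX2fg : X ^ 2 ∣ f - g := by
    have h6 : X ^ 2 ∣ (f - 2 * g + h) + (g - h) := dvd_add h3 hX2gh
    rwa [show (f - 2 * g + h) + (g - h) = f - g from by ring] at h6
  have hX3 : X ^ 3 ∣ f - 2 * g + h := by
    rw [X_pow_dvd_iff]
    intro d hd
    interval_cases d
    · exact X_pow_dvd_iff.mp h3 0 (by norm_num)
    · exact X_pow_dvd_iff.mp h3 1 (by norm_num)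
    · exact k2
  obtain ⟨f₁, hf₁⟩ := hXf
  obtain ⟨g₁, hg₁⟩ := hXg
  obtain ⟨h₁, hh₁⟩ := hXh
  have hX0 : (X : ℚ[X]) ≠ 0 := X_ne_zero
  have mem' : (f₁, g₁, h₁) ∈ M := by
    refine ⟨?_, ?_, ?_⟩
    · have : X * X ∣ X * (f₁ - g₁) := by
        rw [show X * (f₁ - g₁) = f - g from by rw [hf₁, hg₁]; ring, ← pow_two]
        exact hX2fg
      exact (mul_dvd_mul_iff_left hX0).mp this
    · have : X * X ∣ X * (g₁ - h₁) := by
        rw [show X * (g₁ - h₁) = g - h from by rw [hg₁, hh₁]; ring, ← pow_two]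
        exact hX2gh
      exact (mul_dvd_mul_iff_left hX0).mp this
    · have : X * X ^ 2 ∣ X * (f₁ - 2 * g₁ + h₁) := by
        rw [show X * (f₁ - 2 * g₁ + h₁) = f - 2 * g + h from by
          rw [hf₁, hg₁, hh₁]; ring, ← pow_succ']
        exact hX3
      exact (mul_dvd_mul_iff_left hX0).mp this
  have heq : m = (X : ℚ[X]) • (⟨(f₁, g₁, h₁), mem'⟩ : M) := by
    apply Subtype.ext
    show (m : ℚ[X] × ℚ[X] × ℚ[X]) = (X : ℚ[X]) • (f₁, g₁, h₁)
    simp only [Prod.smul_mk, smul_eq_mul]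
    exact Prod.ext hf₁ (Prod.ext hg₁ hh₁)
  rw [heq, N]
  exact Submodule.smul_mem_smul (Ideal.mem_span_singleton_self X) trivial

lemma phi_surjective : Function.Surjective phi := by
  intro v
  have mem : ((C (v 0) + C (v 1) * X + C (v 2) * X ^ 2, C (v 0), C (v 0) - C (v 1) * X) :
      ℚ[X] × ℚ[X] × ℚ[X]) ∈ M := by
    exact ⟨⟨C (v 1) + C (v 2) * X, by ring⟩, ⟨C (v 1), by ring⟩, ⟨C (v 2), by ring⟩⟩
  refine ⟨⟨_, mem⟩, ?_⟩
  funext i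
  fin_cases i <;>
    simp only [phi, LinearMap.coe_mk, AddHom.coe_mk, Fin.isValue, Fin.reduceFinMk,
      Matrix.cons_val_zero, Matrix.cons_val_one, Matrix.head_cons, Matrix.cons_val_two,
      Matrix.tail_cons, Fin.mk_zero, Fin.mk_one]
  · simp
  · rw [show C (v 0) - (C (v 0) - C (v 1) * X) = C (v 1) * X from by ring]
    simp
  · rw [show C (v 0) + C (v 1) * X + C (v 2) * X ^ 2 - 2 * C (v 0) + (C (v 0) - C (v 1) * X)
      = C (v 2) * X ^ 2 from by ring]
    simp [coeff_mul_X_pow']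

def Phi : Q →ₗ[ℚ[X]] (Fin 3 → ℚ) := N.liftQ phi N_le_ker

lemma Phi_bijective : Function.Bijective Phi := by
  constructor
  · rw [← LinearMap.ker_eq_bot, Phi, Submodule.ker_liftQ_eq_bot' N phi]
    exact le_antisymm N_le_ker ker_le_N
  · intro v
    obtain ⟨m, hm⟩ := phi_surjective v
    exact ⟨N.mkQ m, hm⟩

def eQX : Q ≃ₗ[ℚ[X]] (Fin 3 → ℚ) := LinearEquiv.ofBijective Phi Phi_bijective

def eQ : Q ≃ₗ[ℚ] (Fin 3 → ℚ) where
  toFun := eQX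
  invFun := eQX.symm
  left_inv := eQX.left_inv
  right_inv := eQX.right_inv
  map_add' := map_add eQX
  map_smul' q x := by
    rw [RingHom.id_apply]
    show eQX ((algebraMap ℚ ℚ[X] q) • x) = q • eQX x
    rw [map_smul]
    funext i
    rw [target_smul]
    simp [algebraMap_eq]

/-- The quotient `M/(α·M)` of the congruence-triple module `M ⊂ ℚ[α]³` is a
3-dimensional `ℚ`-vector space. -/
theorem quotient_is_three_dimensional : Module.finrank ℚ Q = 3 := by
  rw [eQ.finrank_eq]
  simp

end Stmt19
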